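/- A polyhedron (finite intersection of closed half-spaces) in a finite-dimensional real vector space contains a vertex (an extreme point) if and only if it does not contain a line. -/

import Mathlib

open Set Submodule Module

private lemma aux_mem_orthogonal_span {E : Type*} [NormedAddCommGroup E]
    [InnerProductSpace ℝ E] {s : Set E} {x : E}
    (h : ∀ u ∈ s, inner ℝ u x = (0:ℝ)) : x ∈ (Submodule.span ℝ s)ᗮ := by
  rw [Submodule.mem_orthogonal]
  intro u hu
  induction hu using Submodule.span_induction with
  | mem u hu => exact h u hu
  | zero => simp
  | add u v _ _ hu hv => simp [inner_add_left, hu, hv]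
  | smul a u _ hu => simp [inner_smul_left, hu]

/-- A nonempty polyhedron (finite intersection of closed half-spaces)
in (ℝⁿ)* contains a vertex (an extreme point) if and only if it does not contain
a line {p + t•v : t ∈ ℝ}, v ≠ 0. -/
theorem polyhedron_has_vertex_iff_no_line
    (n d : ℕ) (X : Fin d → (Fin n → ℝ)) (lam : Fin d → ℝ)
    (Δ : Set (Fin n → ℝ))
    (hΔ : Δ = ⋂ j : Fin d, {μ : Fin n → ℝ | lam j ≤ ∑ i, μ i * X j i})
    (hne : Δ.Nonempty) :
    (∃ v, v ∈ Set.extremePoints ℝ Δ) ↔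
      ¬ ∃ (p v : Fin n → ℝ), v ≠ 0 ∧ Set.range (fun t : ℝ => p + t • v) ⊆ Δ := by
  classical
  have hmem : ∀ μ : Fin n → ℝ, μ ∈ Δ ↔ ∀ j, lam j ≤ ∑ i, μ i * X j i := by
    intro μ; simp [hΔ, Set.mem_iInter]
  have hsum : ∀ (μ w : Fin n → ℝ) (t : ℝ) (j : Fin d),
      ∑ i, (μ + t • w) i * X j i = (∑ i, μ i * X j i) + t * ∑ i, w i * X j i := by
    intro μ w t j
    simp [add_mul, Finset.sum_add_distrib, Finset.mul_sum, mul_assoc]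
  constructor
  · rintro ⟨w, hw⟩ ⟨p, v, hv, hline⟩
    -- the direction of the line pairs to 0 with every constraint
    have hb : ∀ j, ∑ i, v i * X j i = 0 := by
      intro j
      by_contra hb0
      have h2 : ∀ t : ℝ, lam j ≤ (∑ i, p i * X j i) + t * (∑ i, v i * X j i) := by
        intro t
        have := (hmem _).1 (hline (Set.mem_range_self t)) j
        rwa [hsum] at this
      have := h2 ((lam j - (∑ i, p i * X j i) - 1) / (∑ i, v i * X j i))
      rw [div_mul_cancel₀ _ hb0] at this
      linarith
    have hwv : ∀ (s : ℝ), w + s • v ∈ Δ := by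
      intro s
      rw [hmem]
      intro j
      rw [hsum, hb j, mul_zero, add_zero]
      exact (hmem w).1 hw.1 j
    have h1 : w + (1:ℝ) • v ∈ Δ := hwv 1
    have h2 : w + (-1:ℝ) • v ∈ Δ := hwv (-1)
    have hseg : w ∈ openSegment ℝ (w + (-1:ℝ) • v) (w + (1:ℝ) • v) := by
      refine ⟨1/2, 1/2, by norm_num, by norm_num, by norm_num, ?_⟩
      module
    have hww := (hw.2 h2 h1 hseg)
    apply hv
    have h0 : (-1:ℝ) • v = 0 := by
      have h := congrArg (fun z => z - w) hww
      simpa [add_sub_cancel_left] using h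
    simpa using h0
  · intro hnl
    -- the hard direction: build an extreme point
    let X' : Fin d → EuclideanSpace ℝ (Fin n) := fun j => WithLp.toLp 2 (X j)
    let A : (Fin n → ℝ) → Set (Fin d) := fun μ => {j | ∑ i, μ i * X j i = lam j}
    let K : (Fin n → ℝ) → Submodule ℝ (EuclideanSpace ℝ (Fin n)) :=
      fun μ => Submodule.span ℝ (X' '' A μ)
    let r : (Fin n → ℝ) → ℕ := fun μ => finrank ℝ (K μ)
    have hS : (r '' Δ).Nonempty := hne.image r
    have hbdd : BddAbove (r '' Δ) := by
      refine ⟨n, ?_⟩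
      rintro m ⟨μ, -, rfl⟩
      simpa [r, finrank_euclideanSpace_fin] using Submodule.finrank_le (K μ)
    obtain ⟨μ, hμΔ, hμr⟩ := Nat.sSup_mem hS hbdd
    have hmax : ∀ ν ∈ Δ, r ν ≤ r μ := by
      intro ν hν
      rw [hμr]
      exact le_csSup hbdd ⟨ν, hν, rfl⟩
    have haμ : ∀ j, lam j ≤ ∑ i, μ i * X j i := (hmem μ).1 hμΔ
    -- key claim: the active constraints at μ span everything
    have hKtop : K μ = ⊤ := by
      by_contra hKt
      have hOrth : (K μ)ᗮ ≠ ⊥ := fun h => hKt (Submodule.orthogonal_eq_bot_iff.mp h)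
      obtain ⟨v, hvK, hv0⟩ := Submodule.exists_mem_ne_zero_of_ne_bot hOrth
      let v' : Fin n → ℝ := v
      have hvA : ∀ j ∈ A μ, ∑ i, v' i * X j i = 0 := by
        intro j hj
        have h0 := (Submodule.mem_orthogonal _ v).1 hvK (X' j)
          (Submodule.subset_span ⟨j, hj, rfl⟩)
        have h1 : (inner ℝ (X' j) v : ℝ) = ∑ i, v' i * X j i := by
          simp [X', v', PiLp.inner_apply, RCLike.inner_apply, mul_comm]
        rw [h1] at h0
        exact h0
      have hv0' : v' ≠ 0 := by
        intro h; apply hv0; ext i; exact congrFun h i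
      have hlineΔ : ¬ (Set.range (fun t : ℝ => μ + t • v') ⊆ Δ) :=
        fun h => hnl ⟨μ, v', hv0', h⟩
      obtain ⟨z, ⟨t0, rfl⟩, ht0⟩ := Set.not_subset.mp hlineΔ
      let w : Fin n → ℝ := t0 • v'
      let a : Fin d → ℝ := fun j => ∑ i, μ i * X j i
      let c : Fin d → ℝ := fun j => ∑ i, w i * X j i
      have hcw : ∀ j, c j = t0 * ∑ i, v' i * X j i := by
        intro j
        show ∑ i, (t0 • v') i * X j i = _
        simp [Finset.mul_sum, mul_assoc]
      have hwA : ∀ j ∈ A μ, c j = 0 := by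
        intro j hj
        rw [hcw, hvA j hj, mul_zero]
      -- some constraint is violated at μ + w
      obtain ⟨j1, hj1⟩ : ∃ j, a j + c j < lam j := by
        by_contra h
        push_neg at h
        apply ht0
        show μ + t0 • v' ∈ Δ
        have hrew : μ + t0 • v' = μ + (1:ℝ) • w := by
          show _ = μ + (1:ℝ) • (t0 • v'); rw [one_smul]
        rw [hrew, hmem]
        intro j
        rw [hsum]
        have := h j
        simp only [one_mul]
        show lam j ≤ a j + c j
        linarith [this]
      have hcj1 : c j1 < 0 := by
        have : lam j1 ≤ a j1 := haμ j1
        linarith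
      let J : Finset (Fin d) := Finset.univ.filter (fun j => c j < 0)
      have hJne : J.Nonempty := ⟨j1, by simp [J, hcj1]⟩
      obtain ⟨j0, hj0J, hj0min⟩ := Finset.exists_min_image J (fun j => (lam j - a j) / c j) hJne
      have hcj0 : c j0 < 0 := by simpa [J] using hj0J
      set t : ℝ := (lam j0 - a j0) / c j0 with htdef
      have ht0' : 0 ≤ t := by
        rw [htdef, le_div_iff_of_neg hcj0]
        have : lam j0 ≤ a j0 := haμ j0
        nlinarith
      have hμ'Δ : μ + t • w ∈ Δ := by
        rw [hmem]
        intro j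
        rw [hsum]
        show lam j ≤ a j + t * c j
        by_cases hcj : c j < 0
        · have hjJ : j ∈ J := by simp [J, hcj]
          have hmin := hj0min j hjJ
          rw [le_div_iff_of_neg hcj] at hmin
          linarith
        · push_neg at hcj
          have h1 : lam j ≤ a j := haμ j
          nlinarith
      -- active set grows strictly in rank
      have hAsub : A μ ⊆ A (μ + t • w) := by
        intro j hj
        have hc0 := hwA j hj
        show ∑ i, (μ + t • w) i * X j i = lam j
        rw [hsum]
        show a j + t * c j = lam j
        rw [hc0, mul_zero, add_zero]
        exact hj
      have hj0A' : j0 ∈ A (μ + t • w) := by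
        show ∑ i, (μ + t • w) i * X j0 i = lam j0
        rw [hsum]
        show a j0 + t * c j0 = lam j0
        rw [htdef, div_mul_cancel₀ _ (ne_of_lt hcj0)]
        ring
      have hXj0 : X' j0 ∉ K μ := by
        intro hmemK
        have h0 := (Submodule.mem_orthogonal _ v).1 hvK (X' j0) hmemK
        have h1 : (inner ℝ (X' j0) v : ℝ) = ∑ i, v' i * X j0 i := by
          simp [X', v', PiLp.inner_apply, RCLike.inner_apply, mul_comm]
        rw [h1] at h0
        have hcz : c j0 = 0 := by rw [hcw, h0, mul_zero]
        linarith
      have hlt : K μ < K (μ + t • w) := by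
        refine lt_of_le_of_ne (Submodule.span_mono (Set.image_mono hAsub)) ?_
        intro heq
        exact hXj0 (heq ▸ Submodule.subset_span ⟨j0, hj0A', rfl⟩)
      have hrank := Submodule.finrank_lt_finrank_of_lt hlt
      have hle := hmax _ hμ'Δ
      simp only [r] at hle
      omega
    -- μ is an extreme point
    refine ⟨μ, hμΔ, ?_⟩
    intro x hx y hy hseg
    obtain ⟨s, t, hs, ht, hst, hxy⟩ := hseg
    have hsplit : ∀ j, s * (∑ i, x i * X j i) + t * (∑ i, y i * X j i) = ∑ i, μ i * X j i := by
      intro j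
      rw [← hxy]
      simp [add_mul, Finset.sum_add_distrib, Finset.mul_sum, mul_assoc]
    have hlam : ∀ j, s * lam j + t * lam j = lam j := by
      intro j; rw [← add_mul, hst, one_mul]
    have hxA : ∀ j ∈ A μ, ∑ i, x i * X j i = lam j := by
      intro j hj
      have h1 : lam j ≤ ∑ i, x i * X j i := (hmem x).1 hx j
      have h2 : lam j ≤ ∑ i, y i * X j i := (hmem y).1 hy j
      have h3 := hsplit j
      have hjμ : ∑ i, μ i * X j i = lam j := hj
      by_contra hne'
      have hlt : lam j < ∑ i, x i * X j i := lt_of_le_of_ne h1 (Ne.symm hne')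
      have e1 : s * lam j < s * ∑ i, x i * X j i := mul_lt_mul_of_pos_left hlt hs
      have e2 : t * lam j ≤ t * ∑ i, y i * X j i := mul_le_mul_of_nonneg_left h2 ht.le
      have := hlam j
      linarith
    have hkey : ∀ z : Fin n → ℝ, (∀ j ∈ A μ, ∑ i, z i * X j i = lam j) → z = μ := by
      intro z hz
      have horth : (WithLp.toLp 2 (z - μ) : EuclideanSpace ℝ (Fin n)) ∈ (K μ)ᗮ := by
        apply aux_mem_orthogonal_span
        rintro u ⟨j, hj, rfl⟩
        have h1 : (inner ℝ (X' j) (WithLp.toLp 2 (z - μ) : EuclideanSpace ℝ (Fin n)) : ℝ)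
            = ∑ i, (z i - μ i) * X j i := by
          simp [X', PiLp.inner_apply, RCLike.inner_apply, mul_comm]
        rw [h1]
        have hsb : ∑ i, (z i - μ i) * X j i = (∑ i, z i * X j i) - ∑ i, μ i * X j i := by
          simp [sub_mul, Finset.sum_sub_distrib]
        rw [hsb, hz j hj]
        have hjμ : ∑ i, μ i * X j i = lam j := hj
        rw [hjμ]; ring
      have hmemtop : (WithLp.toLp 2 (z - μ) : EuclideanSpace ℝ (Fin n)) ∈ K μ := by
        rw [hKtop]; trivial
      have h0 := (Submodule.mem_orthogonal _ _).1 horth _ hmemtop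
      have hzero : (WithLp.toLp 2 (z - μ) : EuclideanSpace ℝ (Fin n)) = 0 := inner_self_eq_zero.mp h0
      have hz0 : z - μ = (0 : Fin n → ℝ) := congrArg WithLp.ofLp hzero
      exact sub_eq_zero.mp hz0
    have hxμ : x = μ := hkey x hxA
    have hyμ : y = μ := by
      apply hkey
      intro j hj
      have h2 : lam j ≤ ∑ i, y i * X j i := (hmem y).1 hy j
      have h1 : ∑ i, x i * X j i = lam j := hxA j hj
      have h3 := hsplit j
      have hjμ : ∑ i, μ i * X j i = lam j := hj
      by_contra hne'
      have hlt : lam j < ∑ i, y i * X j i := lt_of_le_of_ne h2 (Ne.symm hne')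
      have e1 : t * lam j < t * ∑ i, y i * X j i := mul_lt_mul_of_pos_left hlt ht
      have := hlam j
      nlinarith
    exact hxμ
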